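/- Let $N \ge 1$, $\tilde{G} \in \mathbb{R}^{N \times N}$, $\gamma \ge 0$, $\varepsilon > 0$, and let $P \in \mathbb{R}^{N \times N}$ be symmetric positive definite satisfying the algebraic Riccati equation $\tilde{G}^\top P + P \tilde{G} + \gamma^2 P P + (1 + \varepsilon)\mathbf{I}_N = 0$. Let $e : [0, \infty) \to \mathbb{R}^N$ be differentiable and $d : [0,\infty) \to \mathbb{R}^N$ be such that $\dot{e}(t) = \tilde{G} e(t) + d(t)$ and $\|d(t)\| \le \gamma \|e(t)\|$ for all $t \ge 0$. Then $e(t) \to 0$ as $t \to \infty$. -/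

import Mathlib

open Matrix
open scoped RealInnerProductSpace

lemma inner_eq_dot {N : ℕ} (x y : EuclideanSpace ℝ (Fin N)) :
    ⟪x, y⟫ = (WithLp.equiv 2 _ x) ⬝ᵥ (WithLp.equiv 2 _ y) := by
  simp [EuclideanSpace.inner_eq_star_dotProduct]; exact dotProduct_comm _ _

lemma toE_apply {N : ℕ} (A : Matrix (Fin N) (Fin N) ℝ) (x : EuclideanSpace ℝ (Fin N)) :
    WithLp.equiv 2 _ (Matrix.toEuclideanLin A x) = A *ᵥ (WithLp.equiv 2 _ x) :=
  Matrix.ofLp_toEuclideanLin_apply A x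

lemma dot_nonneg {N : ℕ} {P : Matrix (Fin N) (Fin N) ℝ} (hP : P.PosSemidef)
    (u : Fin N → ℝ) : 0 ≤ u ⬝ᵥ (P *ᵥ u) := by
  simpa using hP.re_dotProduct_nonneg u

lemma dot_symm {N : ℕ} {P : Matrix (Fin N) (Fin N) ℝ} (hP : P.IsHermitian)
    (u v : Fin N → ℝ) : u ⬝ᵥ (P *ᵥ v) = v ⬝ᵥ (P *ᵥ u) := by
  rw [Matrix.dotProduct_mulVec, ← Matrix.vecMul_transpose, show Pᵀ = P from hP,
    dotProduct_comm]

lemma dot_cs {N : ℕ} {P : Matrix (Fin N) (Fin N) ℝ} (hP : P.PosSemidef)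
    (u v : Fin N → ℝ) :
    (u ⬝ᵥ (P *ᵥ v)) ^ 2 ≤ (u ⬝ᵥ (P *ᵥ u)) * (v ⬝ᵥ (P *ᵥ v)) := by
  have h := discrim_le_zero (a := u ⬝ᵥ (P *ᵥ u)) (b := 2 * (u ⬝ᵥ (P *ᵥ v)))
    (c := v ⬝ᵥ (P *ᵥ v)) ?_
  · rw [discrim] at h; nlinarith [h]
  · intro t
    have h0 := dot_nonneg hP (t • u + v)
    have hsym := dot_symm hP.isHermitian u v
    simp only [Matrix.mulVec_add, Matrix.mulVec_smul, dotProduct_add,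
      add_dotProduct, smul_dotProduct, dotProduct_smul,
      smul_eq_mul] at h0
    rw [hsym] at h0 ⊢
    generalize u ⬝ᵥ P *ᵥ u = A at *
    generalize v ⬝ᵥ P *ᵥ u = C at *
    generalize v ⬝ᵥ P *ᵥ v = B at *
    nlinarith [h0]

lemma ric_dot {N : ℕ} {Gt P : Matrix (Fin N) (Fin N) ℝ} {γ ε : ℝ} (hPt : Pᵀ = P)
    (hric : Gtᵀ * P + P * Gt + γ ^ 2 • (P * P)
        + (1 + ε) • (1 : Matrix (Fin N) (Fin N) ℝ) = 0) (u : Fin N → ℝ) :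
    (Gt *ᵥ u) ⬝ᵥ (P *ᵥ u) + u ⬝ᵥ (P *ᵥ (Gt *ᵥ u))
      + γ ^ 2 * ((P *ᵥ u) ⬝ᵥ (P *ᵥ u)) + (1 + ε) * (u ⬝ᵥ u) = 0 := by
  have h := congrArg (fun M : Matrix (Fin N) (Fin N) ℝ => u ⬝ᵥ (M *ᵥ u)) hric
  simp only [Matrix.add_mulVec, Matrix.smul_mulVec, Matrix.one_mulVec,
    dotProduct_add, dotProduct_smul, Matrix.zero_mulVec,
    dotProduct_zero, smul_eq_mul, ← Matrix.mulVec_mulVec] at h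
  rw [show u ⬝ᵥ (Gtᵀ *ᵥ (P *ᵥ u)) = (Gt *ᵥ u) ⬝ᵥ (P *ᵥ u) by
    rw [Matrix.dotProduct_mulVec, Matrix.vecMul_transpose]] at h
  rw [show u ⬝ᵥ (P *ᵥ (P *ᵥ u)) = (P *ᵥ u) ⬝ᵥ (P *ᵥ u) by
    rw [Matrix.dotProduct_mulVec, ← hPt, Matrix.vecMul_transpose, hPt]] at h
  linarith [h]

set_option maxHeartbeats 2000000 in
theorem stmt9 (N : ℕ) (hN : 1 ≤ N) (Gt : Matrix (Fin N) (Fin N) ℝ)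
    (γ : ℝ) (hγ : 0 ≤ γ) (ε : ℝ) (hε : 0 < ε)
    (P : Matrix (Fin N) (Fin N) ℝ) (hP : P.PosDef)
    (hric : Gtᵀ * P + P * Gt + γ ^ 2 • (P * P)
        + (1 + ε) • (1 : Matrix (Fin N) (Fin N) ℝ) = 0)
    (e d : ℝ → EuclideanSpace ℝ (Fin N))
    (hde : ∀ t : ℝ, 0 ≤ t →
      HasDerivAt e (Matrix.toEuclideanLin Gt (e t) + d t) t)
    (hd : ∀ t : ℝ, 0 ≤ t → ‖d t‖ ≤ γ * ‖e t‖) :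
    Filter.Tendsto e Filter.atTop (nhds 0) := by
  have hPt : Pᵀ = P := hP.isHermitian
  set Pl : EuclideanSpace ℝ (Fin N) →ₗ[ℝ] EuclideanSpace ℝ (Fin N) :=
    Matrix.toEuclideanLin P with hPl
  set Pc : EuclideanSpace ℝ (Fin N) →L[ℝ] EuclideanSpace ℝ (Fin N) :=
    LinearMap.toContinuousLinearMap Pl with hPc
  have hPcapp : ∀ x, Pc x = Matrix.toEuclideanLin P x := fun x => rfl
  set V : ℝ → ℝ := fun t => ⟪e t, Pc (e t)⟫ with hV
  -- inner products as dot products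
  have hinP : ∀ x y : EuclideanSpace ℝ (Fin N),
      ⟪x, Pc y⟫ = (WithLp.equiv 2 _ x) ⬝ᵥ (P *ᵥ (WithLp.equiv 2 _ y)) := by
    intro x y; rw [hPcapp, inner_eq_dot, toE_apply]
  -- V is nonnegative
  have hV0 : ∀ t, 0 ≤ V t := fun t => by
    show 0 ≤ ⟪e t, Pc (e t)⟫
    rw [hinP]; exact dot_nonneg hP.posSemidef _
  -- operator norm constant
  set M : ℝ := ‖Pc‖ with hM
  have hMpos : 0 < M := by
    obtain ⟨i⟩ : Nonempty (Fin N) := ⟨⟨0, hN⟩⟩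
    set x : EuclideanSpace ℝ (Fin N) := EuclideanSpace.single i 1 with hx
    have hxne : (WithLp.equiv 2 (Fin N → ℝ)) x ≠ 0 := by
      intro h
      have := congrFun h i
      simp [hx] at this
    have hpos : 0 < ⟪x, Pc x⟫ := by
      rw [hinP]
      simpa using hP.re_dotProduct_pos hxne
    have hle : ⟪x, Pc x⟫ ≤ M * (‖x‖ * ‖x‖) := by
      calc ⟪x, Pc x⟫ ≤ ‖x‖ * ‖Pc x‖ := real_inner_le_norm _ _
        _ ≤ ‖x‖ * (M * ‖x‖) := by
            have := Pc.le_opNorm x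
            nlinarith [norm_nonneg x]
        _ = M * (‖x‖ * ‖x‖) := by ring
    nlinarith [norm_nonneg x, hpos, hle]
  set c : ℝ := ε / M with hc
  have hcpos : 0 < c := div_pos hε hMpos
  -- derivative bound for V
  have hVd : ∀ t : ℝ, 0 ≤ t → ∃ v, HasDerivAt V v t ∧ v + c * V t ≤ 0 := by
    intro t ht
    have hPe : HasDerivAt (fun s => Pc (e s))
        (Pc (Matrix.toEuclideanLin Gt (e t) + d t)) t :=
      (Pc.hasFDerivAt.comp_hasDerivAt t (hde t ht))
    have hVder : HasDerivAt V
        (⟪e t, Pc (Matrix.toEuclideanLin Gt (e t) + d t)⟫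
          + ⟪Matrix.toEuclideanLin Gt (e t) + d t, Pc (e t)⟫) t :=
      HasDerivAt.inner ℝ (hde t ht) hPe
    refine ⟨_, hVder, ?_⟩
    set u := (WithLp.equiv 2 (Fin N → ℝ)) (e t) with hu
    set w := (WithLp.equiv 2 (Fin N → ℝ)) (d t) with hw
    have hadd : (WithLp.equiv 2 (Fin N → ℝ))
        (Matrix.toEuclideanLin Gt (e t) + d t) = Gt *ᵥ u + w := by
      simp [toE_apply, hu, hw]
    -- rewrite the two inner products
    have h1 : ⟪e t, Pc (Matrix.toEuclideanLin Gt (e t) + d t)⟫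
        = u ⬝ᵥ (P *ᵥ (Gt *ᵥ u)) + u ⬝ᵥ (P *ᵥ w) := by
      rw [hinP, hadd, Matrix.mulVec_add, dotProduct_add]
    have h2 : ⟪Matrix.toEuclideanLin Gt (e t) + d t, Pc (e t)⟫
        = (Gt *ᵥ u) ⬝ᵥ (P *ᵥ u) + w ⬝ᵥ (P *ᵥ u) := by
      rw [hinP, hadd, add_dotProduct]
    have hric' := ric_dot hPt hric u
    have hsymdw : u ⬝ᵥ (P *ᵥ w) = w ⬝ᵥ (P *ᵥ u) := dot_symm hP.isHermitian u w
    -- norms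
    have hnu : u ⬝ᵥ u = ‖e t‖ ^ 2 := by
      rw [← real_inner_self_eq_norm_sq, inner_eq_dot]
    have hnPu : (P *ᵥ u) ⬝ᵥ (P *ᵥ u) = ‖Pc (e t)‖ ^ 2 := by
      rw [← real_inner_self_eq_norm_sq, inner_eq_dot, hPcapp, toE_apply]
    have hwPu : w ⬝ᵥ (P *ᵥ u) ≤ ‖d t‖ * ‖Pc (e t)‖ := by
      have : w ⬝ᵥ (P *ᵥ u) = ⟪d t, Pc (e t)⟫ := (hinP (d t) (e t)).symm
      rw [this]; exact real_inner_le_norm _ _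
    have hdt := hd t ht
    have hVle : V t ≤ M * ‖e t‖ ^ 2 := by
      rw [hV]
      calc ⟪e t, Pc (e t)⟫ ≤ ‖e t‖ * ‖Pc (e t)‖ := real_inner_le_norm _ _
        _ ≤ M * ‖e t‖ ^ 2 := by
            have := Pc.le_opNorm (e t)
            nlinarith [norm_nonneg (e t)]
    have key : ⟪e t, Pc (Matrix.toEuclideanLin Gt (e t) + d t)⟫
          + ⟪Matrix.toEuclideanLin Gt (e t) + d t, Pc (e t)⟫
        ≤ -ε * ‖e t‖ ^ 2 := by
      rw [h1, h2, hsymdw]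
      have hsq : 0 ≤ (γ * ‖e t‖ - ‖Pc (e t)‖ * γ) ^ 2 := sq_nonneg _
      nlinarith [hric', hnu, hnPu, hwPu, hdt, norm_nonneg (Pc (e t)),
        norm_nonneg (e t), norm_nonneg (d t), sq_nonneg (γ * ‖Pc (e t)‖ - ‖e t‖)]
    have hcV : c * V t ≤ ε * ‖e t‖ ^ 2 := by
      calc c * V t ≤ c * (M * ‖e t‖ ^ 2) :=
            mul_le_mul_of_nonneg_left hVle hcpos.le
        _ = ε * ‖e t‖ ^ 2 := by rw [hc]; field_simp
    linarith [key, hcV]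
  -- W := V * exp(c t) is antitone on Ici 0
  set W : ℝ → ℝ := fun t => V t * Real.exp (c * t) with hW
  have hecont : ContinuousOn e (Set.Ici 0) := fun t ht =>
    ((hde t ht).continuousAt).continuousWithinAt
  have hVcont : ContinuousOn V (Set.Ici 0) :=
    ContinuousOn.inner hecont (Pc.continuous.comp_continuousOn hecont)
  have hWcont : ContinuousOn W (Set.Ici 0) :=
    hVcont.mul ((Real.continuous_exp.comp (continuous_const.mul continuous_id)).continuousOn)
  have hWd : ∀ t : ℝ, 0 ≤ t → ∃ w', HasDerivAt W w' t ∧ w' ≤ 0 := by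
    intro t ht
    obtain ⟨v, hv, hvle⟩ := hVd t ht
    have hexp : HasDerivAt (fun s => Real.exp (c * s)) (c * Real.exp (c * t)) t := by
      have h := ((hasDerivAt_id t).const_mul c).exp
      convert h using 1
      simp [id_eq]
      simp only [id, mul_one]; ring
    refine ⟨_, hv.mul hexp, ?_⟩
    have hep : 0 < Real.exp (c * t) := Real.exp_pos _
    have heq : v * Real.exp (c * t) + V t * (c * Real.exp (c * t))
        = (v + c * V t) * Real.exp (c * t) := by ring
    rw [heq]
    exact mul_nonpos_of_nonpos_of_nonneg hvle hep.le
  have hWanti : AntitoneOn W (Set.Ici 0) := by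
    apply antitoneOn_of_deriv_nonpos (convex_Ici 0) hWcont
    · intro t ht
      rw [interior_Ici] at ht
      exact ((hWd t ht.le).choose_spec.1.differentiableAt).differentiableWithinAt
    · intro t ht
      rw [interior_Ici] at ht
      obtain ⟨w', hw', hle⟩ := hWd t ht.le
      rw [hw'.deriv]; exact hle
  have hVdecay : ∀ t : ℝ, 0 ≤ t → V t ≤ V 0 * Real.exp (-(c * t)) := by
    intro t ht
    have hWle : W t ≤ W 0 := hWanti (Set.self_mem_Ici) ht ht
    rw [hW] at hWle
    simp only [mul_zero, Real.exp_zero, mul_one] at hWle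
    have hep : 0 < Real.exp (c * t) := Real.exp_pos _
    rw [Real.exp_neg, ← div_eq_mul_inv, le_div_iff₀ hep]
    exact hWle
  -- lower bound via P⁻¹
  set Qc : EuclideanSpace ℝ (Fin N) →L[ℝ] EuclideanSpace ℝ (Fin N) :=
    LinearMap.toContinuousLinearMap (Matrix.toEuclideanLin P⁻¹) with hQc
  set K : ℝ := ‖Qc‖ with hK
  have hKnn : 0 ≤ K := norm_nonneg _
  have hKB : ∀ t : ℝ, ‖e t‖ ^ 2 ≤ K * V t := by
    intro t
    set u := (WithLp.equiv 2 (Fin N → ℝ)) (e t) with hu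
    have hnu : u ⬝ᵥ u = ‖e t‖ ^ 2 := by
      rw [← real_inner_self_eq_norm_sq, inner_eq_dot]
    by_cases h0 : e t = 0
    · have : ‖e t‖ ^ 2 = 0 := by simp [h0]
      rw [this]
      exact mul_nonneg hKnn (hV0 t)
    · have hcs := dot_cs hP.posSemidef u (P⁻¹ *ᵥ u)
      have hPinv : P *ᵥ (P⁻¹ *ᵥ u) = u := by
        rw [Matrix.mulVec_mulVec,
          Matrix.mul_nonsing_inv _ (isUnit_iff_ne_zero.mpr hP.det_pos.ne'),
          Matrix.one_mulVec]
      rw [hPinv] at hcs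
      have hQu : (P⁻¹ *ᵥ u) ⬝ᵥ u ≤ K * ‖e t‖ ^ 2 := by
        have heq : (P⁻¹ *ᵥ u) ⬝ᵥ u = ⟪Qc (e t), e t⟫ := by
          rw [inner_eq_dot, show Qc (e t) = Matrix.toEuclideanLin P⁻¹ (e t) from rfl,
            toE_apply]
        rw [heq]
        calc ⟪Qc (e t), e t⟫ ≤ ‖Qc (e t)‖ * ‖e t‖ := real_inner_le_norm _ _
          _ ≤ (K * ‖e t‖) * ‖e t‖ := by
              apply mul_le_mul_of_nonneg_right (Qc.le_opNorm (e t)) (norm_nonneg _)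
          _ = K * ‖e t‖ ^ 2 := by ring
      have hVt : u ⬝ᵥ (P *ᵥ u) = V t := (hinP (e t) (e t)).symm
      have hnepos : 0 < ‖e t‖ ^ 2 := pow_pos (norm_pos_iff.mpr h0) 2
      have hstep : u ⬝ᵥ (P *ᵥ u) * ((P⁻¹ *ᵥ u) ⬝ᵥ u) ≤ V t * (K * ‖e t‖ ^ 2) := by
        rw [hVt]
        exact mul_le_mul_of_nonneg_left hQu (hV0 t)
      nlinarith [hcs, hstep, hnu, hnepos]
  -- squeeze
  have hlim : Filter.Tendsto (fun t : ℝ => K * V 0 * Real.exp (-(c * t)))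
      Filter.atTop (nhds 0) := by
    have h1 : Filter.Tendsto (fun t : ℝ => c * t) Filter.atTop Filter.atTop :=
      Filter.Tendsto.const_mul_atTop hcpos Filter.tendsto_id
    have h2 : Filter.Tendsto (fun t : ℝ => -(c * t)) Filter.atTop Filter.atBot :=
      Filter.tendsto_neg_atTop_atBot.comp h1
    have h3 := Real.tendsto_exp_atBot.comp h2
    have h4 := h3.const_mul (K * V 0)
    simpa using h4
  have hsq : Filter.Tendsto (fun t : ℝ => ‖e t‖ ^ 2) Filter.atTop (nhds 0) := by
    apply squeeze_zero' (Filter.Eventually.of_forall (fun t => by positivity)) ?_ hlim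
    filter_upwards [Filter.eventually_ge_atTop (0 : ℝ)] with t ht
    calc ‖e t‖ ^ 2 ≤ K * V t := hKB t
      _ ≤ K * (V 0 * Real.exp (-(c * t))) :=
          mul_le_mul_of_nonneg_left (hVdecay t ht) hKnn
      _ = K * V 0 * Real.exp (-(c * t)) := by ring
  have hnrm : Filter.Tendsto (fun t : ℝ => ‖e t‖) Filter.atTop (nhds 0) := by
    have h := hsq.sqrt
    simp only [Real.sqrt_zero] at h
    convert h using 2 with t
    rw [Real.sqrt_sq (norm_nonneg _)]
  exact tendsto_zero_iff_norm_tendsto_zero.mpr hnrm
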